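/- If p belongs to the Jacobson radical of W, there exists a unique Δ-derivation ∂ on the free rank-one R-module R{1} with generator e such that ∂((q−1)e) = (p/q)·e; explicitly ∂(e) = (1/(q²−q))·((p+1)/(p+1)_q − 1)·e, which is well-defined since (p+1)_q ≡ p+1 mod (q−1) and (p+1)_q is a unit of R. -/

import Mathlib

/-- The twisted integer (q-analog) `(k)_q = 1 + q + ⋯ + q^{k-1}`. -/
def qInt {R : Type*} [CommRing R] (q : R) (n : ℕ) : R := ∑ i ∈ Finset.range n, q ^ i

private lemma X_mul_cancel' {W : Type*} [CommRing W] {a b : PowerSeries W}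
    (h : PowerSeries.X * a = PowerSeries.X * b) : a = b := by
  ext n
  have := congrArg (PowerSeries.coeff (n + 1)) h
  simpa [PowerSeries.coeff_succ_X_mul] using this

/-- Let `R = W[[q−1]]` (with `q = X+1`), `γ` the `W`-algebra endomorphism with
`γ(q) = q^{p+1}` and `∂_Δ` the Δ-derivation of `R` with `∂_Δ(q) = (p)_q`.  If `p` lies in
the Jacobson radical of `W`, then `(p+1)_q ≡ p+1 mod (q−1)`, `(p+1)_q` is a unit of `R`,
and there is a unique Δ-derivation `D` on the free rank-one module `R·e` (identified with
`R`, `e = 1`) such that `D((q−1)·e) = (p/q)·e`; it satisfies explicitly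
`(q²−q)·D(e) = (p+1)/(p+1)_q − 1`. -/
theorem stmt14 {W : Type*} [CommRing W] (p : ℕ) (hp : 0 < p)
    (hjac : (p : W) ∈ Ideal.jacobson (⊥ : Ideal W))
    (γ : PowerSeries W →ₐ[W] PowerSeries W)
    (hγ : γ (PowerSeries.X + 1) = (PowerSeries.X + 1) ^ (p + 1))
    (dΔ : PowerSeries W →ₗ[W] PowerSeries W)
    (hdΔ : ∀ α β : PowerSeries W, dΔ (α * β) = dΔ α * β + γ α * dΔ β)
    (hdΔq : dΔ (PowerSeries.X + 1) = qInt (PowerSeries.X + 1 : PowerSeries W) p) :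
    (qInt (PowerSeries.X + 1 : PowerSeries W) (p + 1) - ((p : PowerSeries W) + 1) ∈
        Ideal.span {(PowerSeries.X : PowerSeries W)}) ∧
    IsUnit (qInt (PowerSeries.X + 1 : PowerSeries W) (p + 1)) ∧
    (∃! D : PowerSeries W →ₗ[W] PowerSeries W,
      (∀ (α s : PowerSeries W), D (α * s) = dΔ α * s + γ α * D s) ∧
      D (PowerSeries.X : PowerSeries W) =
        (p : PowerSeries W) * Ring.inverse (PowerSeries.X + 1 : PowerSeries W)) ∧
    ∀ D : PowerSeries W →ₗ[W] PowerSeries W,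
      (∀ (α s : PowerSeries W), D (α * s) = dΔ α * s + γ α * D s) →
      D (PowerSeries.X : PowerSeries W) =
        (p : PowerSeries W) * Ring.inverse (PowerSeries.X + 1 : PowerSeries W) →
      ((PowerSeries.X + 1 : PowerSeries W) ^ 2 - (PowerSeries.X + 1)) * D 1 =
        ((p : PowerSeries W) + 1) *
            Ring.inverse (qInt (PowerSeries.X + 1 : PowerSeries W) (p + 1)) - 1 := by
  set q : PowerSeries W := PowerSeries.X + 1 with hqdef
  -- constant coefficients
  have hc0q : PowerSeries.constantCoeff (R := W) q = 1 := by simp [hqdef]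
  have hcqInt : ∀ n : ℕ, PowerSeries.constantCoeff (R := W) (qInt q n) = (n : W) := by
    intro n
    simp [qInt, map_sum, map_pow, hc0q]
  -- part 1
  have h1 : qInt q (p + 1) - ((p : PowerSeries W) + 1) ∈
      Ideal.span {(PowerSeries.X : PowerSeries W)} := by
    rw [Ideal.mem_span_singleton, PowerSeries.X_dvd_iff]
    simp [map_sub, hcqInt]
  -- part 2
  have hp1unit : IsUnit ((p : W) + 1) := by
    simpa using (Ideal.mem_jacobson_bot.mp hjac 1)
  have h2 : IsUnit (qInt q (p + 1)) := by
    rw [PowerSeries.isUnit_iff_constantCoeff, hcqInt]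
    exact_mod_cast hp1unit
  set u : PowerSeries W := qInt q (p + 1) with hudef
  have huu : u * Ring.inverse u = 1 := Ring.mul_inverse_cancel u h2
  -- q is a unit
  have hqunit : IsUnit q := by
    rw [PowerSeries.isUnit_iff_constantCoeff, hc0q]; exact isUnit_one
  have hqq : q * Ring.inverse q = 1 := Ring.mul_inverse_cancel q hqunit
  have hcqi : PowerSeries.constantCoeff (R := W) (Ring.inverse q) = 1 := by
    have := congrArg (PowerSeries.constantCoeff (R := W)) hqq
    simpa [map_mul, hc0q] using this
  -- dΔ 1 = 0
  have hd1 : dΔ 1 = 0 := by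
    have := hdΔ 1 1
    simp only [mul_one, map_one, one_mul] at this
    exact (left_eq_add.mp this)
  -- dΔ X = qInt q p
  have hdX : dΔ (PowerSeries.X : PowerSeries W) = qInt q p := by
    have := hdΔq
    rw [map_add, hd1, add_zero] at this
    exact this
  -- γ X = X * u
  have hγX : γ (PowerSeries.X : PowerSeries W) = PowerSeries.X * u := by
    have h := hγ
    rw [map_add, map_one] at h
    have hgeom : qInt q (p + 1) * (q - 1) = q ^ (p + 1) - 1 := geom_sum_mul q (p + 1)
    have hq1 : q - 1 = PowerSeries.X := by simp [hqdef]
    rw [hq1] at hgeom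
    have : γ (PowerSeries.X : PowerSeries W) = q ^ (p + 1) - 1 := by
      rw [← h]; ring
    rw [this, ← hgeom, hudef]; ring
  -- X divides p * q⁻¹ - qInt q p
  have hdvd : (PowerSeries.X : PowerSeries W) ∣
      ((p : PowerSeries W) * Ring.inverse q - qInt q p) := by
    rw [PowerSeries.X_dvd_iff]
    simp [map_sub, map_mul, hcqi, hcqInt]
  obtain ⟨g, hg⟩ := hdvd
  set c : PowerSeries W := Ring.inverse u * g with hcdef
  have hXuc : PowerSeries.X * u * c =
      (p : PowerSeries W) * Ring.inverse q - qInt q p := by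
    rw [hg, hcdef]
    calc PowerSeries.X * u * (Ring.inverse u * g)
        = (u * Ring.inverse u) * (PowerSeries.X * g) := by ring
      _ = PowerSeries.X * g := by rw [huu, one_mul]
  -- define D
  set D : PowerSeries W →ₗ[W] PowerSeries W :=
    { toFun := fun α => dΔ α + γ α * c
      map_add' := by intro a b; simp only [map_add]; ring
      map_smul' := by
        intro w a
        simp only [map_smul, RingHom.id_apply, smul_add, smul_mul_assoc] } with hDdef
  have hDapp : ∀ α : PowerSeries W, D α = dΔ α + γ α * c := fun _ => rfl
  have hDprod : ∀ α s : PowerSeries W, D (α * s) = dΔ α * s + γ α * D s := by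
    intro α s
    simp only [hDapp, hdΔ, map_mul]
    ring
  have hDX : D (PowerSeries.X : PowerSeries W) =
      (p : PowerSeries W) * Ring.inverse q := by
    rw [hDapp, hdX, hγX]
    rw [show PowerSeries.X * u * c = _ from hXuc]
    ring
  -- uniqueness-style computation: any D' with the properties has D' 1 = c
  have key : ∀ D' : PowerSeries W →ₗ[W] PowerSeries W,
      (∀ α s : PowerSeries W, D' (α * s) = dΔ α * s + γ α * D' s) →
      D' (PowerSeries.X : PowerSeries W) = (p : PowerSeries W) * Ring.inverse q →
      D' 1 = c := by
    intro D' hprod hX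
    have h := hprod PowerSeries.X 1
    rw [mul_one, hX, hdX, hγX] at h
    have h2' : PowerSeries.X * (u * D' 1) = PowerSeries.X * (u * c) := by
      have e1 : PowerSeries.X * (u * D' 1) =
          (p : PowerSeries W) * Ring.inverse q - qInt q p := by
        rw [h]; ring
      have e2 : PowerSeries.X * (u * c) =
          (p : PowerSeries W) * Ring.inverse q - qInt q p := by
        rw [← hXuc]; ring
      rw [e1, e2]
    have h3 : u * D' 1 = u * c := X_mul_cancel' h2'
    calc D' 1 = (Ring.inverse u * u) * D' 1 := by
          rw [mul_comm (Ring.inverse u) u, huu, one_mul]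
      _ = Ring.inverse u * (u * c) := by rw [mul_assoc, h3]
      _ = (u * Ring.inverse u) * c := by ring
      _ = c := by rw [huu, one_mul]
  have huniq : ∀ D' : PowerSeries W →ₗ[W] PowerSeries W,
      (∀ α s : PowerSeries W, D' (α * s) = dΔ α * s + γ α * D' s) →
      D' (PowerSeries.X : PowerSeries W) = (p : PowerSeries W) * Ring.inverse q →
      D' = D := by
    intro D' hprod hX
    have hc1 : D' 1 = c := key D' hprod hX
    apply LinearMap.ext
    intro α
    have := hprod α 1
    rw [mul_one, hc1] at this
    rw [this, hDapp α]
    ring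
  refine ⟨h1, h2, ⟨D, ⟨hDprod, hDX⟩, fun D' h' => huniq D' h'.1 h'.2⟩, ?_⟩
  -- final explicit formula
  intro D' hprod hX
  have hc1 : D' 1 = c := key D' hprod hX
  rw [hc1]
  have hsq : (q ^ 2 - q) = q * PowerSeries.X := by
    rw [hqdef]; ring
  rw [hsq]
  -- q * X * c = q * (X * u * c) * u⁻¹ ... compute via hXuc
  have hXc : PowerSeries.X * c = Ring.inverse u *
      ((p : PowerSeries W) * Ring.inverse q - qInt q p) := by
    rw [← hXuc]
    calc PowerSeries.X * c
        = (u * Ring.inverse u) * (PowerSeries.X * c) := by rw [huu, one_mul]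
      _ = Ring.inverse u * (PowerSeries.X * u * c) := by ring
  have hsum : u = q * qInt q p + 1 := by
    rw [hudef, qInt, qInt, geom_sum_succ]
  calc q * PowerSeries.X * c
      = q * (PowerSeries.X * c) := by ring
    _ = Ring.inverse u * ((p : PowerSeries W) * (q * Ring.inverse q) - q * qInt q p) := by
        rw [hXc]; ring
    _ = Ring.inverse u * (((p : PowerSeries W) + 1) - u) := by
        rw [hqq, hsum]; ring
    _ = ((p : PowerSeries W) + 1) * Ring.inverse u - u * Ring.inverse u := by ring
    _ = ((p : PowerSeries W) + 1) * Ring.inverse u - 1 := by rw [huu]
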